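/- For 0 < r ≤ 1/7, let w_r > 0 be the unique real number with Φ(−w_r) = γ₁([−r,r]) = 2Φ(r) − 1. Then w_r − r > 0 and Φ(−(w_r − r)) ≤ r·(w_r − r). -/

import Mathlib

open MeasureTheory Set
open scoped Pointwise RealInnerProductSpace ENNReal Classical

/-- The standard Gaussian measure on `ℝ^d`, with density `(2π)^(-d/2) exp(-‖x‖²/2)`
with respect to Lebesgue measure. -/
noncomputable def gaussD (d : ℕ) : Measure (EuclideanSpace ℝ (Fin d)) :=
  volume.withDensity fun x =>
    ENNReal.ofReal ((2 * Real.pi) ^ (-(d : ℝ) / 2) * Real.exp (-‖x‖ ^ 2 / 2))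

/-- The standard Gaussian measure on `ℝ`. -/
noncomputable def gauss1 : Measure ℝ :=
  volume.withDensity fun t =>
    ENNReal.ofReal ((2 * Real.pi) ^ (-(1 : ℝ) / 2) * Real.exp (-t ^ 2 / 2))

/-- The slice `(K - y) ∩ ℝu`, viewed as a subset of `ℝ` via the isometry
`t ↦ t • (u / ‖u‖)`. -/
def lineSlice {n : ℕ} (K : Set (EuclideanSpace ℝ (Fin n)))
    (u y : EuclideanSpace ℝ (Fin n)) : Set ℝ :=
  {t : ℝ | y + t • (‖u‖⁻¹ • u) ∈ K}

/-- `Z_B(K, u)`: the set of `y ∈ u^⊥` such that `(K - y) ∩ ℝu` has Euclidean length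
at least `2‖u‖`. -/
noncomputable def ZB {n : ℕ} (K : Set (EuclideanSpace ℝ (Fin n)))
    (u : EuclideanSpace ℝ (Fin n)) : Set (EuclideanSpace ℝ (Fin n)) :=
  {y | ⟪y, u⟫ = 0 ∧ ENNReal.ofReal (2 * ‖u‖) ≤ volume (lineSlice K u y)}

/-- Banaszczyk's transform `K * u = (K + [-u, u]) ∩ (Z_B + ℝu)`, with `K * 0 = K`. -/
noncomputable def bTransform {n : ℕ} (K : Set (EuclideanSpace ℝ (Fin n)))
    (u : EuclideanSpace ℝ (Fin n)) : Set (EuclideanSpace ℝ (Fin n)) :=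
  if u = 0 then K
  else (K + segment ℝ (-u) u) ∩ (ZB K u + Set.range fun t : ℝ => t • u)

/-- `Z_K(u)`: the set of `y ∈ u^⊥` such that `γ₁((K - y) ∩ ℝu) ≥ γ₁([-‖u‖, ‖u‖])`. -/
noncomputable def ZG {n : ℕ} (K : Set (EuclideanSpace ℝ (Fin n)))
    (u : EuclideanSpace ℝ (Fin n)) : Set (EuclideanSpace ℝ (Fin n)) :=
  {y | ⟪y, u⟫ = 0 ∧ gauss1 (Set.Icc (-‖u‖) ‖u‖) ≤ gauss1 (lineSlice K u y)}

/-- The Gaussian Banaszczyk transform `K ∘ u = (K + [-u, u]) ∩ (Z_K(u) + ℝu)`,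
with `K ∘ 0 = K`. -/
noncomputable def gTransform {n : ℕ} (K : Set (EuclideanSpace ℝ (Fin n)))
    (u : EuclideanSpace ℝ (Fin n)) : Set (EuclideanSpace ℝ (Fin n)) :=
  if u = 0 then K
  else (K + segment ℝ (-u) u) ∩ (ZG K u + Set.range fun t : ℝ => t • u)

/-- `Φ`, the cumulative distribution function of the standard Gaussian on `ℝ`. -/
noncomputable def Phi (t : ℝ) : ℝ := (gauss1 (Set.Iic t)).toReal

/-- `Φ⁻¹ : [0,1] → ℝ ∪ {±∞}`, the (extended-real-valued) inverse of `Φ`. -/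
noncomputable def PhiInv (p : ℝ) : EReal :=
  sSup ((fun t : ℝ => (t : EReal)) '' {t : ℝ | Phi t ≤ p})

/-- For `0 < r ≤ 1/7` and `w_r > 0` defined by `Φ(-w_r) = γ₁([-r, r])`, one has
`w_r - r > 0` and `Φ(-(w_r - r)) ≤ r (w_r - r)`. -/
noncomputable def phi (x : ℝ) : ℝ := (2 * Real.pi) ^ (-(1:ℝ)/2) * Real.exp (-x^2/2)

lemma two_pi_pos : (0:ℝ) < 2 * Real.pi := by positivity

lemma c_eq : (2 * Real.pi) ^ (-(1:ℝ)/2) = (Real.sqrt (2*Real.pi))⁻¹ := by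
  rw [Real.sqrt_eq_rpow, ← Real.rpow_neg two_pi_pos.le]
  norm_num

lemma sqrt2pi_pos : 0 < Real.sqrt (2*Real.pi) := Real.sqrt_pos.mpr two_pi_pos

lemma phi_def (x : ℝ) : (2 * Real.pi) ^ (-(1:ℝ)/2) * Real.exp (-x^2/2) = phi x := rfl

lemma phi_pos (x : ℝ) : 0 < phi x := by unfold phi; positivity

lemma phi_integrable : MeasureTheory.Integrable phi := by
  unfold phi
  have h : ∀ x:ℝ, -x^2/2 = -(1/2 : ℝ) * x^2 := fun x => by ring
  simp_rw [h]
  exact (integrable_exp_neg_mul_sq (by norm_num)).const_mul _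

lemma phi_total : ∫ x, phi x = 1 := by
  unfold phi
  have h : ∀ x:ℝ, -x^2/2 = -(1/2 : ℝ) * x^2 := fun x => by ring
  simp_rw [h, MeasureTheory.integral_const_mul, integral_gaussian, c_eq]
  rw [show Real.pi / (1/2) = 2 * Real.pi by ring]
  exact inv_mul_cancel₀ sqrt2pi_pos.ne'

lemma gauss1_toReal {s : Set ℝ} (hs : MeasurableSet s) :
    (gauss1 s).toReal = ∫ x in s, phi x := by
  rw [gauss1, MeasureTheory.withDensity_apply _ hs]
  simp_rw [phi_def]
  rw [← MeasureTheory.ofReal_integral_eq_lintegral_ofReal phi_integrable.integrableOn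
      (Filter.Eventually.of_forall fun x => (phi_pos x).le)]
  exact ENNReal.toReal_ofReal (MeasureTheory.integral_nonneg fun x => (phi_pos x).le)

lemma Phi'_eq (t : ℝ) : ((gauss1 (Set.Iic t)).toReal) = ∫ x in Iic t, phi x :=
  gauss1_toReal measurableSet_Iic

lemma Phi0 : ∫ x in Iic (0:ℝ), phi x = 1/2 := by
  have heven : ∀ x:ℝ, phi (-x) = phi x := fun x => by unfold phi; rw [neg_sq]
  have hsym : ∫ x in Iic (0:ℝ), phi x = ∫ x in Ioi (0:ℝ), phi x := by
    have := integral_comp_neg_Iic (0:ℝ) phi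
    simp_rw [heven, neg_zero] at this
    exact this
  have htot : (∫ x in Iic (0:ℝ), phi x) + ∫ x in Ioi (0:ℝ), phi x = 1 := by
    rw [intervalIntegral.integral_Iic_add_Ioi phi_integrable.integrableOn
      phi_integrable.integrableOn, phi_total]
  linarith

lemma Phi_neg (t : ℝ) : ∫ x in Iic (-t), phi x = 1 - ∫ x in Iic t, phi x := by
  have heven : ∀ x:ℝ, phi (-x) = phi x := fun x => by unfold phi; rw [neg_sq]
  have hsym : ∫ x in Iic (-t), phi x = ∫ x in Ioi t, phi x := by
    have := integral_comp_neg_Iic (-t) phi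
    simp_rw [heven, neg_neg] at this
    exact this
  have htot : (∫ x in Iic t, phi x) + ∫ x in Ioi t, phi x = 1 := by
    rw [intervalIntegral.integral_Iic_add_Ioi phi_integrable.integrableOn
      phi_integrable.integrableOn, phi_total]
  linarith

-- the polynomial integral
lemma poly_integral : ∫ x in (0:ℝ)..(6/5), (1 - x^2/2 + x^4/8 - x^6/48 + 5/1536*x^8)
    = 2639793/2734375 := by
  have hder : ∀ x ∈ Set.uIcc (0:ℝ) (6/5),
      HasDerivAt (fun x : ℝ => x - x^3/6 + x^5/40 - x^7/336 + 5/13824*x^9)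
        (1 - x^2/2 + x^4/8 - x^6/48 + 5/1536*x^8) x := by
    intro x _
    have h : HasDerivAt (fun x : ℝ => x - x^3/6 + x^5/40 - x^7/336 + 5/13824*x^9)
        (1 - (3:ℕ)*x^2/6 + (5:ℕ)*x^4/40 - (7:ℕ)*x^6/336 + 5/13824*((9:ℕ)*x^8)) x := by
      exact ((((hasDerivAt_id x).sub ((hasDerivAt_pow 3 x).div_const 6)).add
        ((hasDerivAt_pow 5 x).div_const 40)).sub ((hasDerivAt_pow 7 x).div_const 336)).add
        (((hasDerivAt_pow 9 x)).const_mul (5/13824))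
    convert h using 1
    push_cast
    ring
  rw [intervalIntegral.integral_eq_sub_of_hasDerivAt hder (by
    apply Continuous.intervalIntegrable; continuity)]
  norm_num

-- pointwise exp bound
lemma exp_quartic {x : ℝ} (hx0 : 0 ≤ x) (hx1 : x ≤ 6/5) :
    Real.exp (-x^2/2) ≤ 1 - x^2/2 + x^4/8 - x^6/48 + 5/1536*x^8 := by
  set u : ℝ := x^2/2 with hu
  have hu0 : 0 ≤ u := by positivity
  have hu1 : u ≤ 1 := by nlinarith
  have hb := Real.exp_bound (x := -u) (by rw [abs_neg, abs_of_nonneg hu0]; exact hu1)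
    (n := 4) (by norm_num)
  simp only [Finset.sum_range_succ, Finset.sum_range_zero] at hb
  rw [abs_neg, abs_of_nonneg hu0] at hb
  norm_num [Nat.factorial] at hb
  have h1 : Real.exp (-u) ≤ 1 - u + u^2/2 - u^3/6 + u^4 * (5/96) := by
    have := abs_le.mp hb
    nlinarith [this.2]
  have hx : -x^2/2 = -u := by rw [hu]; ring
  rw [hx]
  calc Real.exp (-u) ≤ 1 - u + u^2/2 - u^3/6 + u^4 * (5/96) := h1
    _ = 1 - x^2/2 + x^4/8 - x^6/48 + 5/1536*x^8 := by rw [hu]; ring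

set_option maxHeartbeats 1000000 in
theorem Phi_neg_wr_sub_r_le (r w : ℝ) (hr0 : 0 < r) (hr : r ≤ 1 / 7) (hw : 0 < w)
    (hwdef : Phi (-w) = (gauss1 (Set.Icc (-r) r)).toReal) :
    0 < w - r ∧ Phi (-(w - r)) ≤ r * (w - r) := by
  set c : ℝ := (Real.sqrt (2*Real.pi))⁻¹ with hcdef
  have hc0 : 0 < c := inv_pos.mpr sqrt2pi_pos
  have hcS : c * Real.sqrt (2*Real.pi) = 1 := inv_mul_cancel₀ sqrt2pi_pos.ne'
  have hS2 : Real.sqrt (2*Real.pi) ^ 2 = 2*Real.pi := Real.sq_sqrt two_pi_pos.le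
  have hpi : (3141592/1000000 : ℝ) < Real.pi := by
    have := Real.pi_gt_d6
    norm_num at this ⊢
    linarith
  have hS0 := Real.sqrt_nonneg (2*Real.pi)
  have hSlb : (25066/10000 : ℝ) < Real.sqrt (2*Real.pi) := by nlinarith
  have hphic : ∀ x : ℝ, phi x = c * Real.exp (-x^2/2) := by
    intro x; rw [phi, c_eq]
  -- Phi as an integral
  have hPhi : ∀ t : ℝ, Phi t = ∫ x in Iic t, phi x := fun t =>
    gauss1_toReal measurableSet_Iic
  -- Phi is monotone
  have hPhiMono : ∀ a b : ℝ, a ≤ b → Phi a ≤ Phi b := by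
    intro a b hab
    rw [hPhi, hPhi]
    exact setIntegral_mono_set phi_integrable.integrableOn
      (Filter.Eventually.of_forall fun x => (phi_pos x).le)
      (HasSubset.Subset.eventuallyLE (Iic_subset_Iic.mpr hab))
  -- upper bound on Phi (-w)
  have hg : Phi (-w) ≤ 2 * r * c := by
    rw [hwdef, gauss1_toReal measurableSet_Icc]
    have hmono : ∫ x in Icc (-r) r, phi x ≤ ∫ x in Icc (-r) r, c := by
      apply setIntegral_mono_on phi_integrable.integrableOn
        (integrableOn_const measure_Icc_lt_top.ne) measurableSet_Icc
      intro x _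
      rw [hphic]
      nlinarith [Real.exp_le_one_iff.mpr (show -x^2/2 ≤ 0 by nlinarith [sq_nonneg x]),
        Real.exp_pos (-x^2/2)]
    have hconst : ∫ x in Icc (-r) r, (c : ℝ) = (2*r) * c := by
      rw [setIntegral_const, Real.volume_real_Icc_of_le (by linarith), smul_eq_mul]
      ring
    calc ∫ x in Icc (-r) r, phi x ≤ ∫ x in Icc (-r) r, (c : ℝ) := hmono
      _ = (2*r)*c := hconst
      _ = 2*r*c := by ring
  -- numeric bound: Phi (-(6/5)) > (2/7) c
  have hI : ∫ x in (0:ℝ)..(6/5), phi x ≤ c * (2639793/2734375) := by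
    have hcont : Continuous (fun x : ℝ => c * (1 - x^2/2 + x^4/8 - x^6/48 + 5/1536*x^8)) := by
      fun_prop
    have hmono : ∫ x in (0:ℝ)..(6/5), phi x
        ≤ ∫ x in (0:ℝ)..(6/5), c * (1 - x^2/2 + x^4/8 - x^6/48 + 5/1536*x^8) := by
      apply intervalIntegral.integral_mono_on (by norm_num)
        phi_integrable.intervalIntegrable
        (hcont.intervalIntegrable _ _)
      intro x hx
      rw [hphic]
      exact mul_le_mul_of_nonneg_left (exp_quartic hx.1 hx.2) hc0.le
    rwa [intervalIntegral.integral_const_mul, poly_integral] at hmono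
  have h65 : Phi (-(6/5)) = 1/2 - ∫ x in (0:ℝ)..(6/5), phi x := by
    have h1 : (∫ x in Iic ((6:ℝ)/5), phi x) - ∫ x in Iic (0:ℝ), phi x
        = ∫ x in (0:ℝ)..(6/5), phi x :=
      intervalIntegral.integral_Iic_sub_Iic phi_integrable.integrableOn
        phi_integrable.integrableOn
    rw [hPhi, Phi_neg]
    rw [Phi0] at h1
    linarith
  have h65lb : 2/7 * c < Phi (-(6/5)) := by
    rw [h65]
    nlinarith
  -- w ≥ 6/5
  have hw65 : 6/5 ≤ w := by
    by_contra h
    push_neg at h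
    have h1 : Phi (-(6/5)) ≤ Phi (-w) := hPhiMono _ _ (by linarith)
    nlinarith
  have hwr : (37:ℝ)/35 ≤ w - r := by linarith
  refine ⟨by linarith, ?_⟩
  -- step bound
  have hstep : Phi (-(w-r)) ≤ Phi (-w) + r * phi (w - r) := by
    have hdiff : Phi (-(w-r)) - Phi (-w) = ∫ x in (-w)..(-(w-r)), phi x := by
      rw [hPhi, hPhi]
      exact intervalIntegral.integral_Iic_sub_Iic phi_integrable.integrableOn
        phi_integrable.integrableOn
    have hub : ∫ x in (-w)..(-(w-r)), phi x ≤ ∫ x in (-w)..(-(w-r)), phi (w-r) := by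
      apply intervalIntegral.integral_mono_on (by linarith)
        phi_integrable.intervalIntegrable intervalIntegrable_const
      intro x hx
      rw [hphic, hphic]
      have hx2 : (w-r)^2 ≤ x^2 := by nlinarith [hx.1, hx.2]
      exact mul_le_mul_of_nonneg_left
        (Real.exp_le_exp.mpr (by linarith)) hc0.le
    rw [intervalIntegral.integral_const, smul_eq_mul] at hub
    have : -(w-r) - -w = r := by ring
    rw [this] at hub
    linarith
  -- final numeric assembly
  have hexp : Real.exp (-(w-r)^2/2) ≤ 2450/3819 := by
    have h1 : Real.exp (-(w-r)^2/2) ≤ Real.exp (-(1369/2450)) :=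
      Real.exp_le_exp.mpr (by nlinarith)
    have h3 : (3819/2450 : ℝ) ≤ Real.exp (1369/2450) := by
      linarith [Real.add_one_le_exp (1369/2450 : ℝ)]
    have h2 : Real.exp (-(1369/2450 : ℝ)) ≤ 2450/3819 := by
      rw [Real.exp_neg]
      calc (Real.exp (1369/2450 : ℝ))⁻¹ ≤ ((3819:ℝ)/2450)⁻¹ :=
            inv_anti₀ (by norm_num) h3
        _ = 2450/3819 := by norm_num
    linarith
  have hphis : phi (w-r) ≤ c * (2450/3819) := by
    rw [hphic]
    exact mul_le_mul_of_nonneg_left hexp hc0.le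
  have hnum : c * (2 + 2450/3819) ≤ 37/35 := by nlinarith
  have hPhipos : 0 ≤ Phi (-(w-r)) := by
    rw [hPhi]
    exact MeasureTheory.integral_nonneg fun x => (phi_pos x).le
  calc Phi (-(w - r)) ≤ Phi (-w) + r * phi (w-r) := hstep
    _ ≤ 2*r*c + r*(c*(2450/3819)) := by nlinarith
    _ = r * (c * (2 + 2450/3819)) := by ring
    _ ≤ r * (37/35) := by nlinarith
    _ ≤ r * (w - r) := by nlinarith
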